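/- Under the hypotheses of the antisymmetric projector lemma, for any two distinct injective sequences x ≠ y in S_k, the corresponding product-projector operators satisfy ⟨ψ|A_x A_y|ψ⟩ = 0; in particular |ψ⟩ has no support on the intersection of the +1 eigenspaces of A_x and A_y. -/

import Mathlib

open scoped Classical

/-- Expectation value ⟨ψ| A |ψ⟩ of an operator `A` in the state `ψ`. -/
noncomputable def expval {I : Type*} [Fintype I] (A : Matrix I I ℂ) (ψ : I → ℂ) : ℂ :=
  dotProduct (star ψ) (A.mulVec ψ)

/-- The operator `A_s` acting with the rank-one projector onto `φ i` on register `s i`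
(for `i = 1,…,k`) and with the identity on all other registers. -/
noncomputable def projSeq (n η k : ℕ) (s : Fin k → Fin η) (φ : Fin k → Fin (2 ^ n) → ℂ) :
    Matrix (Fin η → Fin (2 ^ n)) (Fin η → Fin (2 ^ n)) ℂ :=
  Matrix.of fun x y =>
    (if ∀ j : Fin η, (∀ i : Fin k, s i ≠ j) → x j = y j then (1 : ℂ) else 0) *
      ∏ i : Fin k, φ i (x (s i)) * star (φ i (y (s i)))

/-- Override `z` on the registers hit by `s` with the values `u`. -/
noncomputable def ov {η k : ℕ} {V : Type*} (s : Fin k → Fin η) (z : Fin η → V)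
    (u : Fin k → V) : Fin η → V :=
  fun j => if h : ∃ i, s i = j then u h.choose else z j

lemma ov_apply_mem {η k : ℕ} {V : Type*} {s : Fin k → Fin η} (hs : Function.Injective s)
    (z : Fin η → V) (u : Fin k → V) (i : Fin k) : ov s z u (s i) = u i := by
  have h : ∃ i', s i' = s i := ⟨i, rfl⟩
  simp only [ov, dif_pos h]
  exact congrArg u (hs h.choose_spec)

lemma ov_apply_not {η k : ℕ} {V : Type*} (s : Fin k → Fin η) (z : Fin η → V)
    (u : Fin k → V) {j : Fin η} (hj : ∀ i, s i ≠ j) : ov s z u j = z j := by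
  have h : ¬ ∃ i, s i = j := by rintro ⟨i, hi⟩; exact hj i hi
  simp only [ov, dif_neg h]

lemma ov_eq_of {η k : ℕ} {V : Type*} (s : Fin k → Fin η) (z : Fin η → V)
    {u u' : Fin k → V} {m : Fin η} (h : ∀ i, s i = m → u i = u' i) :
    ov s z u m = ov s z u' m := by
  simp only [ov]
  split
  · next he => exact h he.choose he.choose_spec
  · rfl

lemma ov_congr_base {η k : ℕ} {V : Type*} (s : Fin k → Fin η) {z z' : Fin η → V}
    (u : Fin k → V) (h : ∀ m, (∀ i, s i ≠ m) → z m = z' m) :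
    ov s z u = ov s z' u := by
  funext m
  simp only [ov]
  split
  · rfl
  · next he => exact h m (fun i hi => he ⟨i, hi⟩)

lemma sum_proj (n η k : ℕ) (s : Fin k → Fin η) (hs : Function.Injective s)
    (φ : Fin k → Fin (2 ^ n) → ℂ) (z : Fin η → Fin (2 ^ n))
    (g : (Fin η → Fin (2 ^ n)) → ℂ) :
    ∑ z' : Fin η → Fin (2 ^ n), projSeq n η k s φ z z' * g z'
      = ∑ u : Fin k → Fin (2 ^ n),
          (∏ i, φ i (z (s i)) * star (φ i (u i))) * g (ov s z u) := by
  have h1 : ∀ z' : Fin η → Fin (2 ^ n), projSeq n η k s φ z z' * g z'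
      = if (∀ j : Fin η, (∀ i : Fin k, s i ≠ j) → z j = z' j) then
          (∏ i, φ i (z (s i)) * star (φ i (z' (s i)))) * g z' else 0 := by
    intro z'
    simp only [projSeq, Matrix.of_apply]
    split <;> ring
  rw [Finset.sum_congr rfl (fun z' _ => h1 z'), ← Finset.sum_filter]
  refine (Finset.sum_bij' (fun u _ => ov s z u) (fun z' _ => fun i => z' (s i)) ?_ ?_ ?_ ?_ ?_).symm
  · intro u _
    simp only [Finset.mem_filter, Finset.mem_univ, true_and]
    exact fun j hj => (ov_apply_not s z u hj).symm
  · intro z' _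
    exact Finset.mem_univ _
  · intro u _
    funext i
    exact ov_apply_mem hs z u i
  · intro z' hz'
    simp only [Finset.mem_filter, Finset.mem_univ, true_and] at hz'
    funext j
    by_cases h : ∃ i, s i = j
    · obtain ⟨i, hi⟩ := h
      rw [← hi, ov_apply_mem hs]
    · rw [ov_apply_not s z _ (fun i hi => h ⟨i, hi⟩)]
      exact hz' j (fun i hi => h ⟨i, hi⟩)
  · intro u _
    congr 2
    funext i
    rw [ov_apply_mem hs]

lemma sum_factor_eq_zero {k : ℕ} {V : Type*} [Fintype V] [Nonempty V] (i₀ : Fin k)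
    (g : V → ℂ) (h : (Fin k → V) → ℂ)
    (hh : ∀ u u', (∀ j, j ≠ i₀ → u j = u' j) → h u = h u')
    (hg : ∑ t, g t = 0) : ∑ u : Fin k → V, g (u i₀) * h u = 0 := by
  set e := Equiv.piSplitAt i₀ (fun _ : Fin k => V) with he
  have hc := Equiv.sum_comp e.symm (fun u : Fin k → V => g (u i₀) * h u)
  rw [← hc, Fintype.sum_prod_type]
  have harb : ∀ (t : V) (w : (j : {j // j ≠ i₀}) → V),
      h (e.symm (t, w)) = h (e.symm (Classical.arbitrary V, w)) := by
    intro t w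
    apply hh
    intro j hj
    simp [he, Equiv.piSplitAt_symm_apply, hj]
  have hsame : ∀ (t : V) (w : (j : {j // j ≠ i₀}) → V), (e.symm (t, w)) i₀ = t := by
    intro t w
    simp [he, Equiv.piSplitAt_symm_apply]
  calc ∑ t : V, ∑ w, g ((e.symm (t, w)) i₀) * h (e.symm (t, w))
      = ∑ t : V, ∑ w, g t * h (e.symm (Classical.arbitrary V, w)) := by
        refine Finset.sum_congr rfl fun t _ => Finset.sum_congr rfl fun w _ => ?_
        rw [hsame, harb]
    _ = (∑ t : V, g t) * ∑ w, h (e.symm (Classical.arbitrary V, w)) := by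
        rw [Finset.sum_mul_sum]
    _ = 0 := by rw [hg, zero_mul]

/-- For distinct injective sequences x ≠ y, ⟨ψ|A_x A_y|ψ⟩ = 0. -/
theorem stmt_3 (n η k : ℕ) (hk : k ≤ η)
    (ψ : (Fin η → Fin (2 ^ n)) → ℂ)
    (hnorm : dotProduct (star ψ) ψ = 1)
    (hanti : ∀ i j : Fin η, i ≠ j → ∀ x : Fin η → Fin (2 ^ n),
      ψ (x ∘ Equiv.swap i j) = -ψ x)
    (φ : Fin k → Fin (2 ^ n) → ℂ)
    (horth : ∀ i j : Fin k,
      dotProduct (star (φ i)) (φ j) = if i = j then 1 else 0)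
    (x y : Fin k → Fin η) (hx : Function.Injective x) (hy : Function.Injective y)
    (hxy : x ≠ y) :
    expval (projSeq n η k x φ * projSeq n η k y φ) ψ = 0 := by
  classical
  have hV : Nonempty (Fin (2 ^ n)) := ⟨⟨0, Nat.two_pow_pos n⟩⟩
  suffices hkey : (projSeq n η k x φ * projSeq n η k y φ).mulVec ψ = 0 by
    rw [expval, hkey, dotProduct_zero]
  funext z
  rw [← Matrix.mulVec_mulVec]
  show ∑ z', projSeq n η k x φ z z' * ((projSeq n η k y φ).mulVec ψ z') = 0
  have hinner : ∀ w : Fin η → Fin (2 ^ n), (projSeq n η k y φ).mulVec ψ w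
      = ∑ v : Fin k → Fin (2 ^ n),
          (∏ j, φ j (w (y j)) * star (φ j (v j))) * ψ (ov y w v) := by
    intro w
    rw [show (projSeq n η k y φ).mulVec ψ w
        = ∑ z'', projSeq n η k y φ w z'' * ψ z'' from rfl]
    exact sum_proj n η k y hy φ w ψ
  rw [sum_proj n η k x hx φ z _]
  simp only [hinner]
  by_cases hA : ∃ i j : Fin k, i ≠ j ∧ x i = y j
  · -- Case A: a genuine collision between different indices, kill by orthogonality
    obtain ⟨i₀, j₀, hne, hcol⟩ := hA
    have hterm : ∀ u : Fin k → Fin (2 ^ n),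
        (∏ i, φ i (z (x i)) * star (φ i (u i))) *
          (∑ v, (∏ j, φ j ((ov x z u) (y j)) * star (φ j (v j))) * ψ (ov y (ov x z u) v))
        = (star (φ i₀ (u i₀)) * φ j₀ (u i₀)) *
            ((φ i₀ (z (x i₀)) *
                ∏ i ∈ Finset.univ.erase i₀, (φ i (z (x i)) * star (φ i (u i)))) *
             ∑ v, (star (φ j₀ (v j₀)) *
                ∏ j ∈ Finset.univ.erase j₀, (φ j ((ov x z u) (y j)) * star (φ j (v j)))) *
               ψ (ov y (ov x z u) v)) := by
      intro u
      have e1 : (∏ i, φ i (z (x i)) * star (φ i (u i)))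
          = (φ i₀ (z (x i₀)) * star (φ i₀ (u i₀))) *
              ∏ i ∈ Finset.univ.erase i₀, (φ i (z (x i)) * star (φ i (u i))) :=
        (Finset.mul_prod_erase _ _ (Finset.mem_univ i₀)).symm
      have hovj₀ : (ov x z u) (y j₀) = u i₀ := by
        rw [← hcol, ov_apply_mem hx]
      have e2 : ∀ v : Fin k → Fin (2 ^ n),
          (∏ j, φ j ((ov x z u) (y j)) * star (φ j (v j)))
          = (φ j₀ (u i₀) * star (φ j₀ (v j₀))) *
              ∏ j ∈ Finset.univ.erase j₀, (φ j ((ov x z u) (y j)) * star (φ j (v j))) := by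
        intro v
        rw [← Finset.mul_prod_erase Finset.univ _ (Finset.mem_univ j₀), hovj₀]
      have e3 : (∑ v, (∏ j, φ j ((ov x z u) (y j)) * star (φ j (v j))) * ψ (ov y (ov x z u) v))
          = φ j₀ (u i₀) * ∑ v, (star (φ j₀ (v j₀)) *
                ∏ j ∈ Finset.univ.erase j₀, (φ j ((ov x z u) (y j)) * star (φ j (v j)))) *
               ψ (ov y (ov x z u) v) := by
        rw [Finset.mul_sum]
        refine Finset.sum_congr rfl fun v _ => ?_
        rw [e2 v]; ring
      rw [e1, e3]; ring
    rw [Finset.sum_congr rfl (fun u _ => hterm u)]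
    refine sum_factor_eq_zero i₀ (fun t => star (φ i₀ t) * φ j₀ t) _ ?_ ?_
    · -- independence of the rest from the i₀-th coordinate
      intro u u' hag
      have hu : ∀ m : Fin η, (∀ j : Fin k, y j ≠ m) → (ov x z u) m = (ov x z u') m := by
        intro m hm
        refine ov_eq_of x z fun i him => ?_
        refine hag i fun hii => ?_
        exact hm j₀ (by rw [← hcol, ← hii, him])
      have hyj : ∀ j : Fin k, j ≠ j₀ → (ov x z u) (y j) = (ov x z u') (y j) := by
        intro j hj
        refine ov_eq_of x z fun i him => ?_
        refine hag i fun hii => ?_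
        exact hj (hy (by rw [← him, hii, hcol]))
      congr 1
      · congr 1
        refine Finset.prod_congr rfl fun i hi => ?_
        rw [hag i (Finset.ne_of_mem_erase hi)]
      · refine Finset.sum_congr rfl fun v _ => ?_
        have : ov y (ov x z u) v = ov y (ov x z u') v := ov_congr_base y v hu
        rw [this]
        congr 2
        refine Finset.prod_congr rfl fun j hj => ?_
        rw [hyj j (Finset.ne_of_mem_erase hj)]
    · -- orthogonality
      have := horth i₀ j₀
      rw [if_neg hne] at this
      rw [← this, dotProduct]
      refine Finset.sum_congr rfl fun t _ => ?_
      simp [Pi.star_apply]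
  · -- Case B: all collisions are diagonal; use antisymmetry
    push_neg at hA
    have hB : ∀ i j : Fin k, x i = y j → i = j := by
      intro i j hij
      by_contra hne
      exact hA i j hne hij
    obtain ⟨i₀, hi₀⟩ := Function.ne_iff.mp hxy
    have hab : x i₀ ≠ y i₀ := hi₀
    have hay : ∀ j : Fin k, y j ≠ x i₀ := by
      intro j hj
      have hij : i₀ = j := hB i₀ j hj.symm
      subst hij
      exact hab hj.symm
    have hbx : ∀ i : Fin k, x i ≠ y i₀ := by
      intro i hi
      have hij : i = i₀ := hB i i₀ hi
      subst hij
      exact hab hi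
    -- flatten the double sum
    rw [show (∑ u : Fin k → Fin (2 ^ n),
        (∏ i, φ i (z (x i)) * star (φ i (u i))) *
          (∑ v, (∏ j, φ j ((ov x z u) (y j)) * star (φ j (v j))) * ψ (ov y (ov x z u) v)))
      = ∑ p : (Fin k → Fin (2 ^ n)) × (Fin k → Fin (2 ^ n)),
          (∏ i, φ i (z (x i)) * star (φ i (p.1 i))) *
            ((∏ j, φ j ((ov x z p.1) (y j)) * star (φ j (p.2 j))) * ψ (ov y (ov x z p.1) p.2))
      from by
        rw [Fintype.sum_prod_type]
        exact Finset.sum_congr rfl fun u _ => by rw [Finset.mul_sum]]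
    set Q : (Fin k → Fin (2 ^ n)) × (Fin k → Fin (2 ^ n)) → ℂ := fun p =>
      (∏ i, φ i (z (x i)) * star (φ i (p.1 i))) *
        ((∏ j, φ j ((ov x z p.1) (y j)) * star (φ j (p.2 j))) * ψ (ov y (ov x z p.1) p.2))
      with hQdef
    have hinv : Function.Involutive (fun p : (Fin k → Fin (2 ^ n)) × (Fin k → Fin (2 ^ n)) =>
        (Function.update p.1 i₀ (p.2 i₀), Function.update p.2 i₀ (p.1 i₀))) := by
      intro p
      simp [Function.update_idem, Function.update_self, Function.update_eq_self]
    set σ := hinv.toPerm with hσ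
    have hQ : ∀ p, Q (σ p) = - Q p := by
      rintro ⟨u, v⟩
      set u' : Fin k → Fin (2 ^ n) := Function.update u i₀ (v i₀) with hu'
      set v' : Fin k → Fin (2 ^ n) := Function.update v i₀ (u i₀) with hv'
      have hσp : σ (u, v) = (u', v') := rfl
      rw [hσp, hQdef]
      dsimp only
      -- the y-register values of `ov x z u` are unchanged
      have hw : ∀ j : Fin k, (ov x z u') (y j) = (ov x z u) (y j) := by
        intro j
        refine ov_eq_of x z fun i him => ?_
        have hij : i = j := hB i j him
        have hji₀ : i ≠ i₀ := by
          rintro rfl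
          rw [hij] at hab him
          exact hab him
        rw [hu', Function.update_of_ne hji₀]
      -- the argument of ψ gets composed with the swap of registers a and b
      have harg : ov y (ov x z u') v' = (ov y (ov x z u) v) ∘ (Equiv.swap (x i₀) (y i₀)) := by
        funext m
        by_cases hma : m = x i₀
        · subst hma
          rw [Function.comp_apply, Equiv.swap_apply_left]
          rw [ov_apply_not y _ _ hay, ov_apply_mem hx, ov_apply_mem hy]
          rw [hu', Function.update_self]
        · by_cases hmb : m = y i₀
          · subst hmb
            rw [Function.comp_apply, Equiv.swap_apply_right]
            rw [ov_apply_mem hy, ov_apply_not y _ _ hay, ov_apply_mem hx]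
            rw [hv', Function.update_self]
          · rw [Function.comp_apply, Equiv.swap_apply_of_ne_of_ne hma hmb]
            by_cases hmy : ∃ j, y j = m
            · obtain ⟨j, hj⟩ := hmy
              subst hj
              rw [ov_apply_mem hy, ov_apply_mem hy]
              have : j ≠ i₀ := by rintro rfl; exact hmb rfl
              rw [hv', Function.update_of_ne this]
            · have hmy' : ∀ j, y j ≠ m := fun j hj => hmy ⟨j, hj⟩
              rw [ov_apply_not y _ _ hmy', ov_apply_not y _ _ hmy']
              refine ov_eq_of x z fun i him => ?_
              have : i ≠ i₀ := by rintro rfl; exact hma him.symm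
              rw [hu', Function.update_of_ne this]
      have hψ : ψ (ov y (ov x z u') v') = - ψ (ov y (ov x z u) v) := by
        rw [harg]
        exact hanti (x i₀) (y i₀) hab _
      rw [hψ]
      have hprodw : (∏ j, φ j ((ov x z u') (y j)) * star (φ j (v' j)))
          = (∏ j, φ j ((ov x z u) (y j)) * star (φ j (v' j))) :=
        Finset.prod_congr rfl fun j _ => by rw [hw j]
      rw [hprodw]
      -- now compare coefficient products by extracting the i₀ factors
      have hsu : (∏ i, φ i (z (x i)) * star (φ i (u' i)))
          = (φ i₀ (z (x i₀)) * star (φ i₀ (v i₀))) *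
              ∏ i ∈ Finset.univ.erase i₀, (φ i (z (x i)) * star (φ i (u i))) := by
        rw [← Finset.mul_prod_erase Finset.univ _ (Finset.mem_univ i₀), hu',
          Function.update_self]
        congr 1
        refine Finset.prod_congr rfl fun i hi => ?_
        rw [Function.update_of_ne (Finset.ne_of_mem_erase hi)]
      have hsv : (∏ j, φ j ((ov x z u) (y j)) * star (φ j (v' j)))
          = (φ i₀ ((ov x z u) (y i₀)) * star (φ i₀ (u i₀))) *
              ∏ j ∈ Finset.univ.erase i₀, (φ j ((ov x z u) (y j)) * star (φ j (v j))) := by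
        rw [← Finset.mul_prod_erase Finset.univ _ (Finset.mem_univ i₀), hv',
          Function.update_self]
        congr 1
        refine Finset.prod_congr rfl fun j hj => ?_
        rw [Function.update_of_ne (Finset.ne_of_mem_erase hj)]
      have hsu0 : (∏ i, φ i (z (x i)) * star (φ i (u i)))
          = (φ i₀ (z (x i₀)) * star (φ i₀ (u i₀))) *
              ∏ i ∈ Finset.univ.erase i₀, (φ i (z (x i)) * star (φ i (u i))) :=
        (Finset.mul_prod_erase _ _ (Finset.mem_univ i₀)).symm
      have hsv0 : (∏ j, φ j ((ov x z u) (y j)) * star (φ j (v j)))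
          = (φ i₀ ((ov x z u) (y i₀)) * star (φ i₀ (v i₀))) *
              ∏ j ∈ Finset.univ.erase i₀, (φ j ((ov x z u) (y j)) * star (φ j (v j))) :=
        (Finset.mul_prod_erase _ _ (Finset.mem_univ i₀)).symm
      rw [hsu, hsv, hsu0, hsv0]
      ring
    have hES := Equiv.sum_comp σ Q
    have hneg : ∑ p, Q (σ p) = - ∑ p, Q p := by
      rw [Finset.sum_congr rfl (fun p _ => hQ p), Finset.sum_neg_distrib]
    rw [hneg] at hES
    have : ∑ p, Q p = 0 := by linear_combination (-1/2 : ℂ) * hES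
    exact this
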